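/- Let G be a group and x, y ∈ G satisfy [x,_n y] = 1. Then the subgroup generated by the conjugates of x by powers of y equals ⟨x, x^y, ..., x^{y^{n-1}}⟩, i.e., the normal closure of ⟨x⟩ in ⟨x,y⟩ restricted to ⟨y⟩-conjugation is generated by n conjugates x^{y^i}, 0 ≤ i ≤ n-1. -/

import Mathlib

/-- The commutator `[a,b] = a⁻¹ b⁻¹ a b`. -/
def cmt {G : Type*} [Group G] (a b : G) : G := a⁻¹ * b⁻¹ * a * b

/-- Left-normed Engel commutator: `engel x y 0 = x`, `engel x y (n+1) = [engel x y n, y]`. -/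
def engel {G : Type*} [Group G] (x y : G) : ℕ → G
  | 0 => x
  | n + 1 => cmt (engel x y n) y

namespace Stmt10Aux

variable {G : Type*} [Group G]

/-- conjugates `x^{y^i}` for `i < m`. -/
def S (x y : G) (m : ℕ) : Set G := {g : G | ∃ i < m, g = (y ^ i)⁻¹ * x * y ^ i}

/-- conjugates `x^{y^i}` for `1 ≤ i ≤ m`. -/
def T (x y : G) (m : ℕ) : Set G := {g : G | ∃ i, 1 ≤ i ∧ i ≤ m ∧ g = (y ^ i)⁻¹ * x * y ^ i}

lemma conj_mem_of_closure {S : Set G} {H : Subgroup G} {c g : G}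
    (hg : g ∈ Subgroup.closure S) (hS : ∀ s ∈ S, c⁻¹ * s * c ∈ H) :
    c⁻¹ * g * c ∈ H := by
  have h2 : Subgroup.closure S ≤ H.comap ((MulAut.conj c⁻¹).toMonoidHom) := by
    rw [Subgroup.closure_le]
    intro s hs
    show ((MulAut.conj c⁻¹).toMonoidHom s) ∈ H
    simpa [MulAut.conj_apply] using hS s hs
  have h3 := h2 hg
  rw [Subgroup.mem_comap] at h3
  simpa [MulAut.conj_apply] using h3

lemma S_mono (x y : G) {m m' : ℕ} (h : m ≤ m') : S x y m ⊆ S x y m' := by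
  rintro g ⟨i, hi, rfl⟩; exact ⟨i, lt_of_lt_of_le hi h, rfl⟩

lemma T_mono (x y : G) {m m' : ℕ} (h : m ≤ m') : T x y m ⊆ T x y m' := by
  rintro g ⟨i, h1, h2, rfl⟩; exact ⟨i, h1, le_trans h2 h, rfl⟩

/-- decomposition: `engel x y m = w * x^{y^m}` with `w` in closure of lower conjugates. -/
lemma L1 (x y : G) : ∀ m : ℕ, ∃ w ∈ Subgroup.closure (S x y m),
    engel x y m = w * ((y ^ m)⁻¹ * x * y ^ m) := by
  intro m
  induction m with
  | zero => exact ⟨1, Subgroup.one_mem _, by simp [engel]⟩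
  | succ m ih =>
    obtain ⟨w, hw, he⟩ := ih
    set c : G := (y ^ m)⁻¹ * x * y ^ m with hc
    refine ⟨c⁻¹ * w⁻¹ * (y⁻¹ * w * y), ?_, ?_⟩
    · have h1 : c ∈ Subgroup.closure (S x y (m + 1)) :=
        Subgroup.subset_closure ⟨m, Nat.lt_succ_self m, rfl⟩
      have h2 : w ∈ Subgroup.closure (S x y (m + 1)) :=
        Subgroup.closure_mono (S_mono x y (Nat.le_succ m)) hw
      have h3 : y⁻¹ * w * y ∈ Subgroup.closure (S x y (m + 1)) := by
        refine conj_mem_of_closure hw ?_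
        rintro s ⟨i, hi, rfl⟩
        refine Subgroup.subset_closure ⟨i + 1, Nat.succ_lt_succ hi, ?_⟩
        rw [pow_succ]
        group
      exact mul_mem (mul_mem (inv_mem h1) (inv_mem h2)) h3
    · show cmt (engel x y m) y = _
      rw [cmt, he, hc, pow_succ]
      group

/-- `engel x y m` lies in closure of conjugates with exponents `< m+1`. -/
lemma L0 (x y : G) (m : ℕ) : engel x y m ∈ Subgroup.closure (S x y (m + 1)) := by
  obtain ⟨w, hw, he⟩ := L1 x y m
  rw [he]
  exact mul_mem (Subgroup.closure_mono (S_mono x y (Nat.le_succ m)) hw)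
    (Subgroup.subset_closure ⟨m, Nat.lt_succ_self m, rfl⟩)

/-- decomposition: `engel x y m = a * x^{±1} * b` with `a,b` in closure of conjugates
with exponents `1..m`. -/
lemma L2 (x y : G) : ∀ m : ℕ, ∃ a ∈ Subgroup.closure (T x y m),
    ∃ b ∈ Subgroup.closure (T x y m),
    engel x y m = a * x * b ∨ engel x y m = a * x⁻¹ * b := by
  intro m
  induction m with
  | zero => exact ⟨1, Subgroup.one_mem _, 1, Subgroup.one_mem _, Or.inl (by simp [engel])⟩
  | succ m ih =>
    obtain ⟨a, ha, b, hb, hcase⟩ := ih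
    have ha' : a ∈ Subgroup.closure (T x y (m + 1)) :=
      Subgroup.closure_mono (T_mono x y (Nat.le_succ m)) ha
    have hb' : b ∈ Subgroup.closure (T x y (m + 1)) :=
      Subgroup.closure_mono (T_mono x y (Nat.le_succ m)) hb
    have hE : y⁻¹ * engel x y m * y ∈ Subgroup.closure (T x y (m + 1)) := by
      refine conj_mem_of_closure (L0 x y m) ?_
      rintro s ⟨i, hi, rfl⟩
      refine Subgroup.subset_closure ⟨i + 1, Nat.succ_le_succ (Nat.zero_le i),
        Nat.succ_le_of_lt hi, ?_⟩
      rw [pow_succ]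
      group
    rcases hcase with he | he
    · refine ⟨b⁻¹, inv_mem hb', a⁻¹ * (y⁻¹ * engel x y m * y), mul_mem (inv_mem ha') hE,
        Or.inr ?_⟩
      show cmt (engel x y m) y = _
      rw [cmt]
      nth_rewrite 1 [he]
      group
    · refine ⟨b⁻¹, inv_mem hb', a⁻¹ * (y⁻¹ * engel x y m * y), mul_mem (inv_mem ha') hE,
        Or.inl ?_⟩
      show cmt (engel x y m) y = _
      rw [cmt]
      nth_rewrite 1 [he]
      group

end Stmt10Aux

theorem stmt10 {G : Type*} [Group G] (x y : G) (n : ℕ)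
    (h : engel x y n = 1) :
    Subgroup.closure (Set.range fun k : ℤ => (y ^ k)⁻¹ * x * y ^ k) =
      Subgroup.closure {g : G | ∃ i < n, g = (y ^ i)⁻¹ * x * y ^ i} := by
  set H := Subgroup.closure {g : G | ∃ i < n, g = (y ^ i)⁻¹ * x * y ^ i} with hH
  have hHS : H = Subgroup.closure (Stmt10Aux.S x y n) := rfl
  -- x^{y^n} expressed from lower conjugates
  have hxn : (y ^ n)⁻¹ * x * y ^ n ∈ Subgroup.closure (Stmt10Aux.S x y n) := by
    obtain ⟨w, hw, he⟩ := Stmt10Aux.L1 x y n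
    have : (y ^ n)⁻¹ * x * y ^ n = w⁻¹ := by
      rw [h] at he
      rw [eq_comm, inv_eq_iff_mul_eq_one, ← he]
    rw [this]; exact inv_mem hw
  -- x expressed from conjugates with exponents 1..n
  have hx : x ∈ Subgroup.closure (Stmt10Aux.T x y n) := by
    obtain ⟨a, ha, b, hb, hcase⟩ := Stmt10Aux.L2 x y n
    rcases hcase with he | he <;> rw [h] at he
    · have hxeq : x = a⁻¹ * 1 * b⁻¹ := by rw [he]; group
      have hmem : a⁻¹ * 1 * b⁻¹ ∈ Subgroup.closure (Stmt10Aux.T x y n) :=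
        mul_mem (mul_mem (inv_mem ha) (one_mem _)) (inv_mem hb)
      rwa [← hxeq] at hmem
    · have hxeq : x⁻¹ = a⁻¹ * 1 * b⁻¹ := by rw [he]; group
      have hmem : a⁻¹ * 1 * b⁻¹ ∈ Subgroup.closure (Stmt10Aux.T x y n) :=
        mul_mem (mul_mem (inv_mem ha) (one_mem _)) (inv_mem hb)
      rw [← hxeq] at hmem
      simpa using inv_mem hmem
  -- key: all conjugates lie in H
  have key : ∀ m : ℕ, ((y ^ m)⁻¹ * x * y ^ m ∈ H) ∧ (y ^ m * x * (y ^ m)⁻¹ ∈ H) := by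
    intro m
    induction m using Nat.strong_induction_on with
    | _ m IH =>
      have hpos : (y ^ m)⁻¹ * x * y ^ m ∈ H := by
        by_cases hm : m < n
        · exact Subgroup.subset_closure ⟨m, hm, rfl⟩
        · push_neg at hm
          set t := m - n with ht
          have hmt : n + t = m := Nat.add_sub_cancel' hm
          have heq : (y ^ m)⁻¹ * x * y ^ m = (y ^ t)⁻¹ * ((y ^ n)⁻¹ * x * y ^ n) * y ^ t := by
            rw [← hmt, pow_add]; group
          rw [heq]
          refine Stmt10Aux.conj_mem_of_closure hxn ?_
          rintro s ⟨i, hi, rfl⟩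
          have hlt : i + t < m := by omega
          have : (y ^ t)⁻¹ * ((y ^ i)⁻¹ * x * y ^ i) * y ^ t
              = (y ^ (i + t))⁻¹ * x * y ^ (i + t) := by
            rw [pow_add]; group
          rw [this]
          exact (IH _ hlt).1
      refine ⟨hpos, ?_⟩
      rcases Nat.eq_zero_or_pos m with rfl | hm1
      · simpa using hpos
      · have heq : y ^ m * x * (y ^ m)⁻¹ = ((y ^ m)⁻¹)⁻¹ * x * (y ^ m)⁻¹ := by group
        rw [heq]
        refine Stmt10Aux.conj_mem_of_closure hx ?_
        rintro s ⟨i, hi1, hi2, rfl⟩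
        rcases le_or_gt m i with hmi | hmi
        · set d := i - m with hd
          have hdm : d + m = i := Nat.sub_add_cancel hmi
          have : ((y ^ m)⁻¹)⁻¹ * ((y ^ i)⁻¹ * x * y ^ i) * (y ^ m)⁻¹
              = (y ^ d)⁻¹ * x * y ^ d := by
            rw [← hdm, pow_add]; group
          rw [this]
          have hdn : d < n := by omega
          exact Subgroup.subset_closure ⟨d, hdn, rfl⟩
        · set d := m - i with hd
          have hdm : d + i = m := Nat.sub_add_cancel (le_of_lt hmi)
          have : ((y ^ m)⁻¹)⁻¹ * ((y ^ i)⁻¹ * x * y ^ i) * (y ^ m)⁻¹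
              = y ^ d * x * (y ^ d)⁻¹ := by
            rw [← hdm, pow_add]; group
          rw [this]
          have hdlt : d < m := by omega
          exact (IH _ hdlt).2
  apply le_antisymm
  · rw [Subgroup.closure_le]
    rintro g ⟨k, rfl⟩
    obtain ⟨m, rfl | rfl⟩ := Int.eq_nat_or_neg k
    · show (y ^ (m : ℤ))⁻¹ * x * y ^ (m : ℤ) ∈ H
      rw [zpow_natCast]
      exact (key m).1
    · show (y ^ (-(m : ℤ)))⁻¹ * x * y ^ (-(m : ℤ)) ∈ H
      rw [zpow_neg, zpow_natCast, inv_inv]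
      exact (key m).2
  · rw [Subgroup.closure_le]
    rintro g ⟨i, hi, rfl⟩
    exact Subgroup.subset_closure ⟨(i : ℤ), by show (y ^ (i:ℤ))⁻¹ * x * y ^ (i:ℤ) = _; rw [zpow_natCast]⟩
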